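/- Any lattice $L$ of rank $2$ in a Euclidean space contains a nonzero vector $g$ with $\|g\|^2 \le (4/3)^{1/2} \, \mathrm{covol}(L)$. -/

import Mathlib

open NumberField FractionalIdeal Finset
open scoped nonZeroDivisors

noncomputable def enorm (F : Type*) [Field F] [NumberField F] (g : F) : ℝ :=
  Real.sqrt (∑ w : InfinitePlace F, w.mult * (w g) ^ 2)

noncomputable def scaleFactor {F : Type*} [Field F] [NumberField F]
    (I : FractionalIdeal (𝓞 F)⁰ F) : ℝ :=
  (FractionalIdeal.absNorm I : ℝ) ^ (-(1 : ℝ) / (Module.finrank ℚ F))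

def PrimitiveOne {F : Type*} [Field F] [NumberField F]
    (I : FractionalIdeal (𝓞 F)⁰ F) : Prop :=
  (1 : F) ∈ I ∧ ∀ d : ℕ, 2 ≤ d → ((d : F)⁻¹ ∉ I)

def StronglyReduced {F : Type*} [Field F] [NumberField F] (C : ℝ)
    (I : FractionalIdeal (𝓞 F)⁰ F) : Prop :=
  PrimitiveOne I ∧
    ∀ g ∈ I, g ≠ 0 → enorm F 1 ≤ C * (scaleFactor I * enorm F g)

noncomputable def parF (F : Type*) [Field F] [NumberField F] : ℝ :=
  (2 / Real.pi) ^ (InfinitePlace.nrComplexPlaces F) * Real.sqrt |(discr F : ℝ)|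




/-- Binary quadratic form determinant identity. -/
private lemma det_identity (a β c x1 x2 y1 y2 : ℝ) :
    (a*x1^2 + 2*β*x1*x2 + c*x2^2) * (a*y1^2 + 2*β*y1*y2 + c*y2^2)
      - (a*x1*y1 + β*(x1*y2 + x2*y1) + c*x2*y2)^2
      = (a*c - β^2) * (x1*y2 - x2*y1)^2 := by ring

lemma key_lemma (a β c : ℝ) (ha : 0 < a) (hD : 0 < a*c - β^2) :
    ∃ m n : ℤ, ¬(m = 0 ∧ n = 0) ∧
      ((a*(m:ℝ)^2 + 2*β*m*n + c*n^2))^2 ≤ (4/3) * (a*c - β^2) := by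
  set D : ℝ := a*c - β^2 with hDdef
  have hc : 0 < c := by nlinarith [sq_nonneg β]
  set f : ℤ × ℤ → ℝ := fun v => a*(v.1:ℝ)^2 + 2*β*v.1*v.2 + c*v.2^2 with hf
  have haid : ∀ v : ℤ × ℤ, a * f v = (a*(v.1:ℝ) + β*v.2)^2 + D*(v.2:ℝ)^2 := by
    intro v; simp only [hf]; ring
  have hcid : ∀ v : ℤ × ℤ, c * f v = (c*(v.2:ℝ) + β*v.1)^2 + D*(v.1:ℝ)^2 := by
    intro v; simp only [hf]; ring
  -- positivity
  have hpos : ∀ v : ℤ × ℤ, v ≠ 0 → 0 < f v := by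
    intro v hv
    rcases eq_or_ne v.2 0 with h2 | h2
    · have h3 : (v.1 : ℝ) ≠ 0 := by
        have : v.1 ≠ 0 := fun h => hv (Prod.ext h h2)
        exact_mod_cast this
      have h4 : (0:ℝ) < (a*(v.1:ℝ) + β*v.2)^2 := by
        rw [h2]; push_cast
        have : a*(v.1:ℝ) + β*0 ≠ 0 := by
          simpa using mul_ne_zero ha.ne' h3
        positivity
      nlinarith [haid v, sq_nonneg ((v.2:ℝ))]
    · have h3 : (0:ℝ) < (v.2:ℝ)^2 := by
        have : (v.2:ℝ) ≠ 0 := by exact_mod_cast h2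
        positivity
      nlinarith [haid v, sq_nonneg (a*(v.1:ℝ) + β*v.2)]
  -- bounds giving finiteness
  have hbound : ∀ v : ℤ × ℤ, f v ≤ a → (v.1:ℝ)^2 ≤ a*c/D ∧ (v.2:ℝ)^2 ≤ a^2/D := by
    intro v hv
    constructor
    · rw [le_div_iff₀ hD]
      nlinarith [hcid v, sq_nonneg (c*(v.2:ℝ) + β*v.1),
        mul_le_mul_of_nonneg_left hv hc.le]
    · rw [le_div_iff₀ hD]
      nlinarith [haid v, sq_nonneg (a*(v.1:ℝ) + β*v.2),
        mul_le_mul_of_nonneg_left hv ha.le]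
  set S : Set (ℤ × ℤ) := {v | v ≠ 0 ∧ f v ≤ a} with hS
  have hfin : S.Finite := by
    set N : ℤ := ⌈max (a*c/D) (a^2/D)⌉ with hN
    have hsub : S ⊆ ↑(Finset.Icc ((-N, -N) : ℤ × ℤ) (N, N)) := by
      intro v hv
      obtain ⟨h1, h2⟩ := hbound v hv.2
      have key : ∀ x : ℤ, (x:ℝ)^2 ≤ max (a*c/D) (a^2/D) → -N ≤ x ∧ x ≤ N := by
        intro x hx
        have hx2 : (x:ℝ)^2 ≤ (N:ℝ) := hx.trans (Int.le_ceil _)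
        have hx3 : x^2 ≤ N := by exact_mod_cast hx2
        have habs : |x| ≤ N := by
          rcases eq_or_ne x 0 with rfl | hx0
          · simpa using hx3.trans' (by positivity)
          · have hone : 1 ≤ |x| := Int.one_le_abs (by simpa using hx0)
            calc |x| ≤ |x| * |x| := le_mul_of_one_le_left (abs_nonneg x) hone
              _ = x^2 := by rw [← abs_mul, abs_mul_self, sq]
              _ ≤ N := hx3
        exact abs_le.mp habs
      have k1 := key v.1 (h1.trans (le_max_left _ _))
      have k2 := key v.2 (h2.trans (le_max_right _ _))
      simp only [Finset.coe_Icc, Set.mem_Icc, Prod.le_def]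
      exact ⟨⟨k1.1, k2.1⟩, ⟨k1.2, k2.2⟩⟩
    exact Set.Finite.subset (Finset.finite_toSet _) hsub
  have h10mem : ((1, 0) : ℤ × ℤ) ∈ S := by
    constructor
    · simp [Prod.ext_iff]
    · simp [hf]
  have hne : S.Nonempty := ⟨(1, 0), h10mem⟩
  obtain ⟨v₀, hv₀S, hv₀min⟩ := Set.exists_min_image S f hfin hne
  have hfa : f ((1,0) : ℤ × ℤ) = a := by simp [hf]
  have hmin : ∀ v : ℤ × ℤ, v ≠ 0 → f v₀ ≤ f v := by
    intro v hv
    by_cases h : f v ≤ a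
    · exact hv₀min v ⟨hv, h⟩
    · push_neg at h
      have := hv₀min _ h10mem
      rw [hfa] at this
      linarith
  set μ : ℝ := f v₀ with hμ
  have hμpos : 0 < μ := hpos v₀ hv₀S.1
  clear_value μ
  -- reduce to coprime minimizer
  set g : ℤ := (Int.gcd v₀.1 v₀.2 : ℤ) with hg
  have hgnat : 0 < Int.gcd v₀.1 v₀.2 := by
    rw [Int.gcd_pos_iff]
    by_contra hcon
    push_neg at hcon
    apply hv₀S.1
    rw [Prod.ext_iff]
    simpa using hcon
  have hg1 : (1:ℤ) ≤ g := by rw [hg]; omega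
  set m₁ : ℤ := v₀.1 / g with hm₁
  set n₁ : ℤ := v₀.2 / g with hn₁
  have he1 : g * m₁ = v₀.1 := Int.mul_ediv_cancel' (Int.gcd_dvd_left _ _)
  have he2 : g * n₁ = v₀.2 := Int.mul_ediv_cancel' (Int.gcd_dvd_right _ _)
  have he0 : ((m₁, n₁) : ℤ × ℤ) ≠ 0 := by
    intro h
    rw [Prod.ext_iff] at h
    simp only [Prod.fst_zero, Prod.snd_zero] at h
    apply hv₀S.1
    rw [Prod.ext_iff]
    simp only [Prod.fst_zero, Prod.snd_zero]
    exact ⟨by rw [← he1, h.1, mul_zero], by rw [← he2, h.2, mul_zero]⟩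
  have hfscale : f v₀ = (g:ℝ)^2 * f (m₁, n₁) := by
    simp only [hf, ← he1, ← he2]; push_cast; ring
  have hgm : f (m₁, n₁) = μ := by
    have h1 : μ ≤ f (m₁, n₁) := hmin _ he0
    have h2 : μ = (g:ℝ)^2 * f (m₁, n₁) := by rw [hμ]; exact hfscale
    have hg1' : (1:ℝ) ≤ (g:ℝ)^2 := by
      have : (1:ℝ) ≤ (g:ℝ) := by exact_mod_cast hg1
      nlinarith
    nlinarith [hμpos]
  have hfm : f (m₁, n₁) = a*(m₁:ℝ)^2 + 2*β*m₁*n₁ + c*(n₁:ℝ)^2 := by simp [hf]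
  have hμe : μ = a*(m₁:ℝ)^2 + 2*β*m₁*n₁ + c*(n₁:ℝ)^2 := hgm.symm.trans hfm
  have hcop : Int.gcd m₁ n₁ = 1 := Int.gcd_div_gcd_div_gcd hgnat
  obtain ⟨u, v, huv⟩ := Int.isCoprime_iff_gcd_eq_one.mpr hcop
  set p : ℤ := -v with hp
  set q : ℤ := u with hq
  have hdet1 : m₁ * q - n₁ * p = 1 := by rw [hp, hq]; linarith [huv]
  set t : ℝ := a*(m₁:ℝ)*p + β*((m₁:ℝ)*q + (n₁:ℝ)*p) + c*(n₁:ℝ)*q with ht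
  set k : ℤ := -round (t/μ) with hk
  set s : ℝ := t + k*μ with hs
  have hsbound : |s| ≤ μ/2 := by
    have h1 : |t/μ - round (t/μ)| ≤ 1/2 := abs_sub_round _
    have h2 : s = (t/μ - round (t/μ)) * μ := by
      rw [hs, hk]
      push_cast
      field_simp
      ring
    rw [h2, abs_mul, abs_of_pos hμpos]
    calc |t/μ - ↑(round (t/μ))| * μ ≤ (1/2) * μ :=
          mul_le_mul_of_nonneg_right h1 hμpos.le
      _ = μ/2 := by ring
  set w1 : ℤ := p + k*m₁ with hw1
  set w2 : ℤ := q + k*n₁ with hw2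
  have hwdet : m₁ * w2 - n₁ * w1 = 1 := by
    rw [hw1, hw2]; linear_combination hdet1
  have hw0 : ((w1, w2) : ℤ × ℤ) ≠ 0 := by
    intro h
    rw [Prod.ext_iff] at h
    simp only [Prod.fst_zero, Prod.snd_zero] at h
    rw [h.1, h.2] at hwdet
    simp at hwdet
  have hfw : μ ≤ f (w1, w2) := hmin _ hw0
  have hBew : a*(m₁:ℝ)*w1 + β*((m₁:ℝ)*w2 + (n₁:ℝ)*w1) + c*(n₁:ℝ)*w2 = s := by
    rw [hw1, hw2, hs, ht, hμe]
    push_cast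
    ring
  have hfwv : f (w1, w2) = a*(w1:ℝ)^2 + 2*β*w1*w2 + c*(w2:ℝ)^2 := by simp [hf]
  clear_value w1 w2
  clear_value s
  clear_value k
  clear_value t
  have hFW := hfwv ▸ hfw
  have hMN := hfm ▸ hgm
  have hdid : f (m₁, n₁) * f (w1, w2) - s^2 = D := by
    rw [← hBew, hfm, hfwv]
    have hid := det_identity a β c (m₁:ℝ) (n₁:ℝ) (w1:ℝ) (w2:ℝ)
    rw [hid]
    have hcast : ((m₁:ℝ)*w2 - (n₁:ℝ)*w1) = 1 := by exact_mod_cast hwdet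
    rw [hcast]
    ring
  rw [hgm] at hdid
  set F : ℝ := f (w1, w2) with hFdef

  clear_value F
  have hfinal : μ^2 ≤ (4/3) * D := by
    clear * - hdid hfw hsbound hμpos hD
    clear_value D
    have h1 : s^2 ≤ μ^2/4 := by
      have h2 := abs_le.mp hsbound
      nlinarith [hμpos]
    have h3 : μ^2 ≤ μ * F := by
      have := mul_le_mul_of_nonneg_left hfw hμpos.le
      nlinarith
    linarith [h3, h1, hdid]
  refine ⟨m₁, n₁, ?_, ?_⟩
  · intro ⟨h1, h2⟩
    exact he0 (by rw [Prod.ext_iff]; exact ⟨by simpa using h1, by simpa using h2⟩)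
  · rw [← hfm, hgm]
    exact hfinal

theorem rank_two_lattice_short_vector (b : Fin 2 → EuclideanSpace ℝ (Fin 2))
    (hb : LinearIndependent ℝ b) :
    ∃ m : Fin 2 → ℤ, (¬ ∀ i, m i = 0) ∧
      ‖∑ i, (m i : ℝ) • b i‖ ^ 2 ≤
        ((4 : ℝ) / 3) ^ ((1 : ℝ) / 2) * |(Matrix.of fun i j => b i j).det| := by
  set A : Matrix (Fin 2) (Fin 2) ℝ := Matrix.of fun i j => b i j with hA
  have hdet2 : A.det = b 0 0 * b 1 1 - b 0 1 * b 1 0 := by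
    rw [Matrix.det_fin_two]
    simp [hA]
  set a : ℝ := b 0 0 ^ 2 + b 0 1 ^ 2 with ha'
  set β : ℝ := b 0 0 * b 1 0 + b 0 1 * b 1 1 with hβ'
  set c : ℝ := b 1 0 ^ 2 + b 1 1 ^ 2 with hc'
  have hDdet : a * c - β ^ 2 = A.det ^ 2 := by rw [hdet2, ha', hβ', hc']; ring
  -- norm formula
  have hnorm : ∀ m n : ℤ, ‖(m:ℝ) • b 0 + (n:ℝ) • b 1‖ ^ 2
      = a*(m:ℝ)^2 + 2*β*m*n + c*n^2 := by
    intro m n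
    rw [EuclideanSpace.norm_eq, Real.sq_sqrt (by positivity)]
    rw [Fin.sum_univ_two]
    simp only [PiLp.add_apply, PiLp.smul_apply, smul_eq_mul, Real.norm_eq_abs, sq_abs]
    rw [ha', hβ', hc']
    ring
  -- det nonzero
  have hdetne : A.det ≠ 0 := by
    have h1 : LinearIndependent ℝ (fun i => A i) := by
      have := hb.map' (WithLp.linearEquiv 2 ℝ (Fin 2 → ℝ)).toLinearMap (LinearEquiv.ker _)
      exact this
    replace h1 := Matrix.linearIndependent_rows_iff_isUnit.mp h1
    exact (Matrix.isUnit_iff_isUnit_det A).mp h1 |>.ne_zero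
  have hD : 0 < a * c - β ^ 2 := by
    rw [hDdet]
    positivity
  have ha : 0 < a := by
    have hb0 : b 0 ≠ 0 := hb.ne_zero 0
    have : b 0 0 ≠ 0 ∨ b 0 1 ≠ 0 := by
      by_contra hcon
      push_neg at hcon
      apply hb0
      ext j
      fin_cases j
      · exact hcon.1
      · exact hcon.2
    rw [ha']
    rcases this with h | h
    · have : 0 < b 0 0 ^ 2 := by positivity
      nlinarith [sq_nonneg (b 0 1)]
    · have : 0 < b 0 1 ^ 2 := by positivity
      nlinarith [sq_nonneg (b 0 0)]
  obtain ⟨m, n, hmn0, hmn⟩ := key_lemma a β c ha hD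
  refine ⟨![m, n], ?_, ?_⟩
  · intro h
    exact hmn0 ⟨h 0, h 1⟩
  · have hsum : ∑ i, ((![m, n] i : ℝ)) • b i = (m:ℝ) • b 0 + (n:ℝ) • b 1 := by
      rw [Fin.sum_univ_two]
      simp
    rw [hsum, hnorm m n]
    set μ : ℝ := a*(m:ℝ)^2 + 2*β*m*n + c*n^2 with hμ
    have hμnn : 0 ≤ μ := by rw [hμ, ← hnorm m n]; positivity
    have h2 : μ ≤ Real.sqrt ((4/3) * (a*c - β^2)) := by
      rw [← Real.sqrt_sq hμnn]
      exact Real.sqrt_le_sqrt hmn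
    calc μ ≤ Real.sqrt ((4/3) * (a*c - β^2)) := h2
      _ = ((4:ℝ)/3) ^ ((1:ℝ)/2) * |A.det| := by
          rw [hDdet, Real.sqrt_mul (by norm_num), Real.sqrt_sq_eq_abs,
            Real.sqrt_eq_rpow]
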